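/- Let M_2 = A Diag(λ̃) A^T for A ∈ R^{d×k} of full column rank k and λ̃ ∈ R^k with positive entries, and let M_2 = U Diag(γ) U^T be its rank-k SVD. Define the whitening matrix W := U Diag(γ^{-1/2}). Then the matrix V := W^T A Diag(λ̃^{1/2}) ∈ R^{k×k} is orthogonal: V V^T = V^T V = I_k. -/

import Mathlib

open Matrix

/-- Whitening. Let `M₂ = A Diag(λ̃) Aᵀ` with `A ∈ ℝ^{d×k}` of full column
rank and `λ̃ > 0`, and let `M₂ = U Diag(γ) Uᵀ` be its rank-k SVD (`U` with orthonormal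
columns, `γ > 0`). With whitening matrix `W := U Diag(γ^{-1/2})`, the matrix
`V := Wᵀ A Diag(λ̃^{1/2})` is orthogonal: `V Vᵀ = Vᵀ V = I_k`. -/
theorem whitening_orthogonal
    (d k : ℕ) (hkd : k ≤ d)
    (A : Matrix (Fin d) (Fin k) ℝ) (hA : A.rank = k)
    (lam : Fin k → ℝ) (hlam : ∀ j, 0 < lam j)
    (U : Matrix (Fin d) (Fin k) ℝ) (hU : Uᵀ * U = 1)
    (γ : Fin k → ℝ) (hγ : ∀ j, 0 < γ j)
    (hSVD : U * diagonal γ * Uᵀ = A * diagonal lam * Aᵀ)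
    (W : Matrix (Fin d) (Fin k) ℝ)
    (hW : W = U * diagonal (fun j => (Real.sqrt (γ j))⁻¹))
    (V : Matrix (Fin k) (Fin k) ℝ)
    (hV : V = Wᵀ * A * diagonal (fun j => Real.sqrt (lam j))) :
    V * Vᵀ = 1 ∧ Vᵀ * V = 1 := by
  have h1 : (diagonal fun j => Real.sqrt (lam j)) * (diagonal fun j => Real.sqrt (lam j))
      = diagonal lam := by
    rw [diagonal_mul_diagonal,
      show (fun j => Real.sqrt (lam j) * Real.sqrt (lam j)) = lam from
        funext fun j => Real.mul_self_sqrt (hlam j).le]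
  have h2 : (diagonal fun j => (Real.sqrt (γ j))⁻¹) * (diagonal γ *
      (diagonal fun j => (Real.sqrt (γ j))⁻¹)) = (1 : Matrix (Fin k) (Fin k) ℝ) := by
    rw [diagonal_mul_diagonal, diagonal_mul_diagonal,
      show (fun j => (Real.sqrt (γ j))⁻¹ * (γ j * (Real.sqrt (γ j))⁻¹)) = fun _ => (1:ℝ) from
        funext fun j => by
          have hs : Real.sqrt (γ j) ≠ 0 := (Real.sqrt_pos.2 (hγ j)).ne'
          rw [← Real.mul_self_sqrt (hγ j).le]
          field_simp
          rw [Real.sqrt_sq (Real.sqrt_nonneg _)],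
      diagonal_one]
  have hUU : ∀ (X : Matrix (Fin k) (Fin k) ℝ), Uᵀ * (U * X) = X := by
    intro X
    rw [← Matrix.mul_assoc, hU, Matrix.one_mul]
  have hM : ∀ (X : Matrix (Fin d) (Fin k) ℝ),
      A * (diagonal lam * (Aᵀ * X)) = U * (diagonal γ * (Uᵀ * X)) := by
    intro X
    simp only [← Matrix.mul_assoc]
    rw [← hSVD]
  have key : V * Vᵀ = 1 := by
    subst hV hW
    simp only [transpose_mul, transpose_transpose, diagonal_transpose, Matrix.mul_assoc]
    rw [← Matrix.mul_assoc (diagonal fun j => Real.sqrt (lam j)), h1, hM, hUU, hUU, h2]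
  exact ⟨key, by rwa [mul_eq_one_comm] at key⟩
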